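/- (Concentration Inequality) Let H_X be a discrete coarse geometric module with discreteness gauge Ẽ, and T : H_X → H_Y an operator with ‖T v‖ ≥ η‖v‖ for all v (η > 0). Fix δ, κ > 0, an entourage F of Y, and measurable B, C ⊆ Y with F(B) ⊆ C and ‖χ_B T‖ ≥ κ. Suppose ‖χ_C T χ_A‖ ≤ δ for every measurable Ẽ-controlled A ⊆ X. Then for every ε with 0 < ε < κ²(η² − δ²)^{1/2} / (2‖T‖), there exists a projection p on H_X with Supp(p) ⊆ Ẽ such that Ad(T)(p) = T p T* is not ε-F-quasi-local. -/

import Mathlib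

open ContinuousLinearMap

/-- Composition of relations. -/
def relComp {X Y Z : Type*} (S : Set (Z × Y)) (R : Set (Y × X)) : Set (Z × X) :=
  {p | ∃ y, (p.1, y) ∈ S ∧ (y, p.2) ∈ R}

/-- Transposition of a relation. -/
def relOp {X Y : Type*} (R : Set (Y × X)) : Set (X × Y) := {p | (p.2, p.1) ∈ R}

/-- Image of a set under a relation: `R(A) = {y | ∃ x ∈ A, (y,x) ∈ R}`. -/
def relImage {X Y : Type*} (R : Set (Y × X)) (A : Set X) : Set Y :=
  {y | ∃ x ∈ A, (y, x) ∈ R}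

/-- A coarse structure on a set `X`. -/
structure CoarseStructure (X : Type*) where
  ents : Set (Set (X × X))
  mem_of_subset : ∀ {E F : Set (X × X)}, E ∈ ents → F ⊆ E → F ∈ ents
  union_mem : ∀ {E F : Set (X × X)}, E ∈ ents → F ∈ ents → E ∪ F ∈ ents
  diag_mem : {p : X × X | p.1 = p.2} ∈ ents
  op_mem : ∀ {E : Set (X × X)}, E ∈ ents → relOp E ∈ ents
  comp_mem : ∀ {E F : Set (X × X)}, E ∈ ents → F ∈ ents → relComp E F ∈ ents

/-- A coarse geometric module for a coarse space `(X, 𝓔)`: a Hilbert space `H` together with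
a nondegenerate unital representation of a unital Boolean algebra of subsets of `X` by
orthogonal projections. -/
structure CoarseModule {X : Type*} (𝓔 : CoarseStructure X) (H : Type*)
    [NormedAddCommGroup H] [InnerProductSpace ℂ H] [CompleteSpace H] where
  meas : Set (Set X)
  univ_mem : Set.univ ∈ meas
  inter_mem : ∀ {A B : Set X}, A ∈ meas → B ∈ meas → A ∩ B ∈ meas
  compl_mem : ∀ {A : Set X}, A ∈ meas → Aᶜ ∈ meas
  proj : Set X → H →L[ℂ] H
  proj_idem : ∀ A ∈ meas, IsIdempotentElem (proj A)
  proj_sa : ∀ A ∈ meas, IsSelfAdjoint (proj A)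
  proj_inter : ∀ A ∈ meas, ∀ B ∈ meas, proj (A ∩ B) = (proj A).comp (proj B)
  proj_union : ∀ A ∈ meas, ∀ B ∈ meas, A ∩ B = ∅ → proj (A ∪ B) = proj A + proj B
  proj_univ : proj Set.univ = 1
  nondegenerate : ∃ E ∈ 𝓔.ents, relOp E = E ∧ {p : X × X | p.1 = p.2} ⊆ E ∧
    (Submodule.span ℂ {v : H | ∃ A ∈ meas, A ×ˢ A ⊆ E ∧ v ∈ Set.range (proj A)}).topologicalClosure = ⊤

variable {X Y : Type*} {𝓔 : CoarseStructure X} {𝓕 : CoarseStructure Y}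
  {HX HY : Type*}
  [NormedAddCommGroup HX] [InnerProductSpace ℂ HX] [CompleteSpace HX]
  [NormedAddCommGroup HY] [InnerProductSpace ℂ HY] [CompleteSpace HY]

/-- The support of an operator `t : H_X → H_Y` is contained in `S ⊆ Y × X` if
`χ_B ∘ t ∘ χ_A = 0` for all measurable `A ⊆ X`, `B ⊆ Y` with `B ∩ S(A) = ∅`. -/
def SuppIn (MX : CoarseModule 𝓔 HX) (MY : CoarseModule 𝓕 HY)
    (t : HX →L[ℂ] HY) (S : Set (Y × X)) : Prop :=
  ∀ A ∈ MX.meas, ∀ B ∈ MY.meas, B ∩ relImage S A = ∅ →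
    (MY.proj B).comp (t.comp (MX.proj A)) = 0

/-- An operator `s` on `H_Y` is `ε`-`F`-quasi-local if `‖χ_{B'} s χ_{A'}‖ ≤ ε` for all
measurable `A', B' ⊆ Y` with `B' ∩ F(A') = ∅`. -/
def IsQuasiLocalWith (M : CoarseModule 𝓕 HY) (s : HY →L[ℂ] HY) (ε : ℝ)
    (F : Set (Y × Y)) : Prop :=
  ∀ A' ∈ M.meas, ∀ B' ∈ M.meas, B' ∩ relImage F A' = ∅ →
    ‖(M.proj B').comp (s.comp (M.proj A'))‖ ≤ ε


section HilbertHelpers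

local notation "⟪" x ", " y "⟫" => @inner ℂ _ _ x y

variable {H : Type*} [NormedAddCommGroup H] [InnerProductSpace ℂ H]

lemma sa_inner_comm [CompleteSpace H] {P : H →L[ℂ] H} (hsa : IsSelfAdjoint P) (z w : H) :
    ⟪P z, w⟫ = ⟪z, P w⟫ := by
  have := (ContinuousLinearMap.isSelfAdjoint_iff_isSymmetric.mp hsa) z w
  simpa using this

lemma sa_idem_norm_apply_le [CompleteSpace H] {P : H →L[ℂ] H} (hi : IsIdempotentElem P)
    (hsa : IsSelfAdjoint P) (z : H) : ‖P z‖ ≤ ‖z‖ := by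
  rcases eq_or_lt_of_le (norm_nonneg (P z)) with h0 | h0
  · rw [← h0]; exact norm_nonneg z
  have h1 : (‖P z‖ : ℝ) ^ 2 = Complex.re ⟪P z, P z⟫ := (inner_self_eq_norm_sq (𝕜 := ℂ) _).symm
  have h2 : ⟪P z, P z⟫ = ⟪z, P z⟫ := by
    rw [sa_inner_comm hsa]
    congr 1
    calc P (P z) = (P * P) z := rfl
      _ = P z := by rw [hi]
  have h3 : Complex.re ⟪z, P z⟫ ≤ ‖z‖ * ‖P z‖ :=
    le_trans (Complex.re_le_norm _) (by exact norm_inner_le_norm _ _)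
  rw [h2] at h1
  nlinarith [h0, h1, h3]

lemma sa_idem_pyth [CompleteSpace H] {P : H →L[ℂ] H} (hi : IsIdempotentElem P)
    (hsa : IsSelfAdjoint P) (z : H) : ‖z - P z‖ ^ 2 = ‖z‖ ^ 2 - ‖P z‖ ^ 2 := by
  have hP0 : P (z - P z) = 0 := by
    rw [map_sub]
    have : P (P z) = (P * P) z := rfl
    rw [this, hi, sub_self]
  have horth : ⟪P z, z - P z⟫ = 0 := by
    rw [sa_inner_comm hsa, hP0, inner_zero_right]
  have hz : z = P z + (z - P z) := by abel
  have := norm_add_sq (𝕜 := ℂ) (P z) (z - P z)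
  rw [← hz, horth] at this
  simp at this
  linarith [this]

lemma exists_subset_norm_sum_sq {ι : Type*} (u : ι → H) (J : Finset ι) :
    ∀ Aoff : H, ∃ S ⊆ J, ‖Aoff + (2:ℝ)⁻¹ • ∑ i ∈ J, u i‖ ^ 2 + (4:ℝ)⁻¹ * ∑ i ∈ J, ‖u i‖ ^ 2
      ≤ ‖Aoff + ∑ i ∈ S, u i‖ ^ 2 := by
  classical
  induction J using Finset.induction_on with
  | empty => intro Aoff; exact ⟨∅, Finset.Subset.refl _, by simp⟩
  | @insert k J' hk ih =>
    intro Aoff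
    obtain ⟨S₁, hS₁, h₁⟩ := ih Aoff
    obtain ⟨S₂, hS₂, h₂⟩ := ih (Aoff + u k)
    have hkS₂ : k ∉ S₂ := fun h => hk (hS₂ h)
    set x : H := Aoff + (2:ℝ)⁻¹ • ∑ i ∈ J', u i with hx
    have par : ‖x + (2:ℝ)⁻¹ • u k‖ ^ 2 + (4:ℝ)⁻¹ * ‖u k‖ ^ 2
        = (‖x‖ ^ 2 + ‖x + u k‖ ^ 2) / 2 := by
      have hpl := parallelogram_law_with_norm ℂ (x + (2:ℝ)⁻¹ • u k) ((2:ℝ)⁻¹ • u k)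
      have e1 : x + (2:ℝ)⁻¹ • u k + (2:ℝ)⁻¹ • u k = x + u k := by
        rw [add_assoc, ← add_smul]; norm_num
      have e2 : x + (2:ℝ)⁻¹ • u k - (2:ℝ)⁻¹ • u k = x := by abel
      have e3 : ‖(2:ℝ)⁻¹ • u k‖ = 2⁻¹ * ‖u k‖ := by
        rw [norm_smul]; norm_num
      rw [e1, e2, e3] at hpl
      nlinarith [hpl]
    have key : ‖Aoff + (2:ℝ)⁻¹ • ∑ i ∈ insert k J', u i‖ ^ 2
          + (4:ℝ)⁻¹ * ∑ i ∈ insert k J', ‖u i‖ ^ 2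
        = ((‖x‖ ^ 2 + (4:ℝ)⁻¹ * ∑ i ∈ J', ‖u i‖ ^ 2)
          + (‖x + u k‖ ^ 2 + (4:ℝ)⁻¹ * ∑ i ∈ J', ‖u i‖ ^ 2)) / 2 := by
      rw [Finset.sum_insert hk, Finset.sum_insert hk]
      have e4 : Aoff + (2:ℝ)⁻¹ • (u k + ∑ i ∈ J', u i) = x + (2:ℝ)⁻¹ • u k := by
        rw [smul_add, hx]; abel
      rw [e4]
      linarith [par]
    have hx2 : x + u k = Aoff + u k + (2:ℝ)⁻¹ • ∑ i ∈ J', u i := by rw [hx]; abel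
    rw [hx2] at key
    rcases le_total (‖x‖ ^ 2 + (4:ℝ)⁻¹ * ∑ i ∈ J', ‖u i‖ ^ 2)
        (‖Aoff + u k + (2:ℝ)⁻¹ • ∑ i ∈ J', u i‖ ^ 2 + (4:ℝ)⁻¹ * ∑ i ∈ J', ‖u i‖ ^ 2)
        with hle | hle
    · refine ⟨insert k S₂, Finset.insert_subset_insert _ hS₂, ?_⟩
      have e5 : Aoff + ∑ i ∈ insert k S₂, u i = Aoff + u k + ∑ i ∈ S₂, u i := by
        rw [Finset.sum_insert hkS₂]; abel
      rw [key, e5]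
      linarith [h₂, hle]
    · refine ⟨S₁, hS₁.trans (Finset.subset_insert _ _), ?_⟩
      rw [key]
      linarith [h₁, hle]

end HilbertHelpers

section CMHelpers

variable {W : Type*} {𝓖 : CoarseStructure W} {H' : Type*} [NormedAddCommGroup H']
  [InnerProductSpace ℂ H'] [CompleteSpace H']

lemma CM_empty_mem (M : CoarseModule 𝓖 H') : (∅ : Set W) ∈ M.meas := by
  simpa using M.compl_mem M.univ_mem

lemma CM_proj_empty (M : CoarseModule 𝓖 H') : M.proj ∅ = 0 := by
  have h := M.proj_union ∅ (CM_empty_mem M) ∅ (CM_empty_mem M) (by simp)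
  rw [Set.union_self] at h
  exact left_eq_add.mp h

lemma CM_proj_compl (M : CoarseModule 𝓖 H') {C : Set W} (hC : C ∈ M.meas) :
    M.proj Cᶜ = 1 - M.proj C := by
  have h := M.proj_union C hC Cᶜ (M.compl_mem hC) (Set.inter_compl_self C)
  rw [Set.union_compl_self, M.proj_univ] at h
  rw [eq_sub_iff_add_eq, add_comm, ← h]

lemma CM_proj_biUnion (M : CoarseModule 𝓖 H') {ι : Type*} (A : ι → Set W)
    (hAmeas : ∀ i, A i ∈ M.meas) (hAunions : ∀ Js : Set ι, (⋃ i ∈ Js, A i) ∈ M.meas)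
    (hAdisj : ∀ i j, i ≠ j → A i ∩ A j = ∅) (J : Finset ι) :
    M.proj (⋃ i ∈ (J : Set ι), A i) = ∑ i ∈ J, M.proj (A i) := by
  classical
  induction J using Finset.induction_on with
  | empty => simpa using CM_proj_empty M
  | @insert k J' hk ih =>
    have hUnion : (⋃ i ∈ ((insert k J' : Finset ι) : Set ι), A i)
        = A k ∪ ⋃ i ∈ (J' : Set ι), A i := by
      rw [Finset.coe_insert, Set.biUnion_insert]
    rw [hUnion]
    have hdisj2 : A k ∩ (⋃ i ∈ (J' : Set ι), A i) = ∅ := by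
      rw [Set.eq_empty_iff_forall_notMem]
      rintro y ⟨hy1, hy2⟩
      obtain ⟨i, hiJ, hyAi⟩ := Set.mem_iUnion₂.mp hy2
      have hik : k ≠ i := by
        rintro rfl
        exact hk (by exact_mod_cast hiJ)
      exact (Set.eq_empty_iff_forall_notMem.mp (hAdisj k i hik) y) ⟨hy1, hyAi⟩
    rw [M.proj_union (A k) (hAmeas k) _ (hAunions (J' : Set ι)) hdisj2, ih,
      Finset.sum_insert hk]

end CMHelpers

local notation "⟪" x ", " y "⟫" => @inner ℂ _ _ x y


set_option maxHeartbeats 2000000 in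
/-- **Concentration Inequality.**  Let `H_X` be a discrete coarse geometric module with
discreteness gauge `Ẽ` and `T : H_X → H_Y` an operator with `‖T v‖ ≥ η ‖v‖` (`η > 0`).
Fix `δ, κ > 0`, an entourage `F` of `Y`, and measurable `B, C ⊆ Y` with `F(B) ⊆ C` and
`‖χ_B T‖ ≥ κ`.  If `‖χ_C T χ_A‖ ≤ δ` for every measurable `Ẽ`-controlled `A ⊆ X`, then for
every `ε` with `0 < ε < κ²√(η² − δ²)/(2‖T‖)` there is a projection `p` with `Supp(p) ⊆ Ẽ`
such that `T p T*` is not `ε`-`F`-quasi-local. -/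
theorem stmt15 (MX : CoarseModule 𝓔 HX) (MY : CoarseModule 𝓕 HY)
    -- `Ẽ` is a gauge witnessing discreteness of `H_X`:
    (Egauge : Set (X × X)) (hEmem : Egauge ∈ 𝓔.ents) (hEsymm : relOp Egauge = Egauge)
    (hEdiag : {p : X × X | p.1 = p.2} ⊆ Egauge)
    {ι : Type*} (A : ι → Set X)
    (hAmeas : ∀ i, A i ∈ MX.meas)
    (hAbd : ∀ i, (A i) ×ˢ (A i) ⊆ Egauge)
    (hAdisj : ∀ i j, i ≠ j → A i ∩ A j = ∅)
    (hAsum : ∀ v : HX, HasSum (fun i => MX.proj (A i) v) v)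
    (hAunions : ∀ J : Set ι, (⋃ i ∈ J, A i) ∈ MX.meas)
    -- the operator `T`, bounded below by `η`:
    (T : HX →L[ℂ] HY) (η : ℝ) (hη : 0 < η) (hlow : ∀ v : HX, η * ‖v‖ ≤ ‖T v‖)
    -- data on the `Y` side:
    (δ κ : ℝ) (hδ : 0 < δ) (hκ : 0 < κ)
    (F : Set (Y × Y)) (hF : F ∈ 𝓕.ents)
    (B C : Set Y) (hB : B ∈ MY.meas) (hC : C ∈ MY.meas)
    (hFB : relImage F B ⊆ C) (hκB : κ ≤ ‖(MY.proj B).comp T‖)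
    (hsmall : ∀ A' ∈ MX.meas, A' ×ˢ A' ⊆ Egauge →
      ‖((MY.proj C).comp T).comp (MX.proj A')‖ ≤ δ) :
    ∀ ε : ℝ, 0 < ε → ε < κ ^ 2 * Real.sqrt (η ^ 2 - δ ^ 2) / (2 * ‖T‖) →
      ∃ p : HX →L[ℂ] HX, IsIdempotentElem p ∧ IsSelfAdjoint p ∧ SuppIn MX MX p Egauge ∧
        ¬ IsQuasiLocalWith MY ((T.comp p).comp (ContinuousLinearMap.adjoint T)) ε F := by
  intro ε hεpos hεlt
  classical
  have hprojB_le : ‖MY.proj B‖ ≤ 1 :=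
    opNorm_le_bound _ zero_le_one fun z => by
      rw [one_mul]; exact sa_idem_norm_apply_le (MY.proj_idem B hB) (MY.proj_sa B hB) z
  have hκT : κ ≤ ‖T‖ := by
    calc κ ≤ ‖(MY.proj B).comp T‖ := hκB
      _ ≤ ‖MY.proj B‖ * ‖T‖ := opNorm_comp_le _ _
      _ ≤ 1 * ‖T‖ := mul_le_mul_of_nonneg_right hprojB_le (norm_nonneg _)
      _ = ‖T‖ := one_mul _
  have hT0 : (0:ℝ) < ‖T‖ := lt_of_lt_of_le hκ hκT
  set D : ℝ := η ^ 2 - δ ^ 2 with hDdef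
  have hD0 : 0 < D := by
    by_contra hcon
    push_neg at hcon
    have h0 : Real.sqrt D = 0 := Real.sqrt_eq_zero'.mpr hcon
    rw [h0] at hεlt
    rw [mul_zero, zero_div] at hεlt
    linarith
  have hsD : 0 < Real.sqrt D := Real.sqrt_pos.mpr hD0
  have hsDsq : Real.sqrt D ^ 2 = D := Real.sq_sqrt hD0.le
  have hεκ : 2 * ε / Real.sqrt D < κ := by
    rw [div_lt_iff₀ hsD]
    have h1 : ε * (2 * ‖T‖) < κ ^ 2 * Real.sqrt D := (lt_div_iff₀ (by positivity)).mp hεlt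
    nlinarith [h1, mul_le_mul_of_nonneg_right (mul_le_mul_of_nonneg_left hκT hκ.le) hsD.le,
      hT0, hεpos]
  -- choose a unit vector `v` with `‖χ_B T v‖` large
  have hvex : ∃ v₀ : HX, 2 * ε / Real.sqrt D * ‖v₀‖ < ‖(MY.proj B) (T v₀)‖ := by
    by_contra hcon
    push_neg at hcon
    have hb : ‖(MY.proj B).comp T‖ ≤ 2 * ε / Real.sqrt D :=
      opNorm_le_bound _ (by positivity) fun z => by
        simpa [ContinuousLinearMap.comp_apply] using hcon z
    linarith [hκB, hεκ]
  obtain ⟨v₀, hv₀⟩ := hvex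
  have hv₀0 : v₀ ≠ 0 := by
    rintro rfl
    simp only [norm_zero, mul_zero, map_zero] at hv₀
    exact lt_irrefl _ hv₀
  have hnv₀ : (0:ℝ) < ‖v₀‖ := norm_pos_iff.mpr hv₀0
  set v : HX := ((‖v₀‖ : ℂ))⁻¹ • v₀ with hvdef
  have hv1 : ‖v‖ = 1 := by
    rw [hvdef, norm_smul, norm_inv, Complex.norm_real, Real.norm_eq_abs,
      abs_of_nonneg hnv₀.le, inv_mul_cancel₀ hnv₀.ne']
  set x : HY := MY.proj B (T v) with hxdef
  have hx_norm : 2 * ε / Real.sqrt D < ‖x‖ := by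
    have hxv : x = ((‖v₀‖:ℂ))⁻¹ • (MY.proj B (T v₀)) := by
      rw [hxdef, hvdef, map_smul, map_smul]
    rw [hxv, norm_smul, norm_inv, Complex.norm_real, Real.norm_eq_abs, abs_of_nonneg hnv₀.le]
    calc 2 * ε / Real.sqrt D = ‖v₀‖⁻¹ * (2 * ε / Real.sqrt D * ‖v₀‖) := by
          field_simp
      _ < ‖v₀‖⁻¹ * ‖(MY.proj B) (T v₀)‖ := mul_lt_mul_of_pos_left hv₀ (inv_pos.mpr hnv₀)
  have hx0 : (0:ℝ) < ‖x‖ := lt_of_le_of_lt (by positivity) hx_norm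
  have hPBx : MY.proj B x = x := by
    rw [hxdef]
    calc MY.proj B (MY.proj B (T v)) = ((MY.proj B) * (MY.proj B)) (T v) := rfl
      _ = MY.proj B (T v) := by rw [MY.proj_idem B hB]
  have hinner_x : ⟪(adjoint T) x, v⟫ = ((‖x‖:ℂ)) ^ 2 := by
    rw [adjoint_inner_left]
    calc ⟪x, T v⟫ = ⟪MY.proj B x, T v⟫ := by rw [hPBx]
      _ = ⟪x, MY.proj B (T v)⟫ := sa_inner_comm (MY.proj_sa B hB) x (T v)
      _ = ⟪x, x⟫ := by rw [← hxdef]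
      _ = ((‖x‖:ℂ)) ^ 2 := inner_self_eq_norm_sq_to_K x
  set vv : ι → HX := fun i => MX.proj (A i) v with hvvdef
  set bb : ι → ℝ := fun i => ‖vv i‖ with hbbdef
  set cc : ι → ℂ := fun i => ⟪(adjoint T) x, vv i⟫ with hccdef
  set mm : ι → ℝ := fun i => ‖cc i‖ / bb i with hmmdef
  have hb_nonneg : ∀ i, 0 ≤ bb i := fun i => by
    simp only [hbbdef]; exact norm_nonneg _
  have hvv_idem : ∀ i, MX.proj (A i) (vv i) = vv i := by
    intro i
    simp only [hvvdef]
    calc MX.proj (A i) (MX.proj (A i) v) = ((MX.proj (A i)) * (MX.proj (A i))) v := rfl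
      _ = MX.proj (A i) v := by rw [MX.proj_idem (A i) (hAmeas i)]
  have hsum : HasSum cc ((‖x‖:ℂ) ^ 2) := by
    have h := (hAsum v).mapL (innerSL ℂ ((adjoint T) x))
    simpa [hccdef, hvvdef, innerSL_apply_apply, hinner_x] using h
  set τ : ℝ := 2 * ε / Real.sqrt D * ‖x‖ with hτdef
  have hτ0 : 0 < τ := by
    rw [hτdef]
    exact mul_pos (div_pos (by linarith) hsD) hx0
  have hτx : τ < ‖x‖ ^ 2 := by
    rw [hτdef]
    nlinarith [hx_norm, hx0]
  set mrg : ℝ := (‖x‖ ^ 2 - τ) / 2 with hmrgdef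
  have hmrg0 : 0 < mrg := by rw [hmrgdef]; linarith
  have hJex : ∃ J : Finset ι, ‖(∑ i ∈ J, cc i) - ((‖x‖:ℂ)) ^ 2‖ < mrg := by
    have h : Filter.Tendsto (fun s : Finset ι => ∑ i ∈ s, cc i) Filter.atTop
        (nhds (((‖x‖:ℂ)) ^ 2)) := hsum
    have h2 := Metric.tendsto_nhds.mp h mrg hmrg0
    rw [Filter.eventually_atTop] at h2
    obtain ⟨J₀, hJ₀⟩ := h2
    exact ⟨J₀, by simpa [dist_eq_norm] using hJ₀ J₀ le_rfl⟩
  obtain ⟨J, hJ⟩ := hJex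
  have hReJ : ‖x‖ ^ 2 - mrg < ∑ i ∈ J, (cc i).re := by
    have h1 : |((∑ i ∈ J, cc i) - ((‖x‖:ℂ)) ^ 2).re| ≤ ‖(∑ i ∈ J, cc i) - ((‖x‖:ℂ)) ^ 2‖ := by
      exact Complex.abs_re_le_norm _
    have h2 : ((∑ i ∈ J, cc i) - ((‖x‖:ℂ)) ^ 2).re = (∑ i ∈ J, (cc i).re) - ‖x‖ ^ 2 := by
      rw [Complex.sub_re, Complex.re_sum, ← Complex.ofReal_pow, Complex.ofReal_re]
    have h4 := lt_of_le_of_lt h1 hJ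
    rw [h2] at h4
    have h5 := abs_lt.mp h4
    linarith [h5.1]
  have hbsum : ∑ i ∈ J, (bb i) ^ 2 ≤ 1 := by
    have hterm : ∀ i, (bb i) ^ 2 = (⟪v, vv i⟫).re := by
      intro i
      have h1 : ⟪vv i, vv i⟫ = ⟪v, vv i⟫ := by
        have h2 := sa_inner_comm (MX.proj_sa (A i) (hAmeas i)) v (vv i)
        rw [hvv_idem i] at h2
        exact h2
      have h3 : (bb i) ^ 2 = (⟪vv i, vv i⟫).re := by
        simp only [hbbdef]
        exact (inner_self_eq_norm_sq (𝕜 := ℂ) (vv i)).symm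
      rw [h3, h1]
    have hsum_eq : ∑ i ∈ J, (bb i) ^ 2 = (⟪v, ∑ i ∈ J, vv i⟫).re := by
      rw [inner_sum, Complex.re_sum]
      exact Finset.sum_congr rfl fun i _ => hterm i
    have hUmeas := hAunions (↑J)
    have hUproj : (∑ i ∈ J, vv i) = MX.proj (⋃ i ∈ (J : Set ι), A i) v := by
      rw [CM_proj_biUnion MX A hAmeas hAunions hAdisj J, ContinuousLinearMap.sum_apply]
    have h5 : (⟪v, MX.proj (⋃ i ∈ (J : Set ι), A i) v⟫).re
        ≤ ‖v‖ * ‖MX.proj (⋃ i ∈ (J : Set ι), A i) v‖ :=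
      le_trans (Complex.re_le_norm _) (by exact norm_inner_le_norm _ _)
    have h6 : ‖MX.proj (⋃ i ∈ (J : Set ι), A i) v‖ ≤ ‖v‖ :=
      sa_idem_norm_apply_le (MX.proj_idem _ hUmeas) (MX.proj_sa _ hUmeas) v
    rw [hv1] at h5 h6
    rw [hsum_eq, hUproj]
    linarith [h5, h6]
  have hc_eq : ∀ i, ‖cc i‖ = bb i * mm i := by
    intro i
    by_cases hbi : bb i = 0
    · have hvi : vv i = 0 := by
        simp only [hbbdef] at hbi
        exact norm_eq_zero.mp hbi
      have hci : cc i = 0 := by simp [hccdef, hvi]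
      simp [hmmdef, hci, hbi]
    · simp only [hmmdef]
      field_simp
  set uu : ι → HY := fun i =>
    ((starRingEnd ℂ) (cc i) * (((bb i : ℝ) : ℂ) ^ 2)⁻¹) • (MY.proj Cᶜ (T (vv i))) with huudef
  have hPCc : MY.proj Cᶜ = 1 - MY.proj C := CM_proj_compl MY hC
  have hu_bd : ∀ i, D * (mm i) ^ 2 ≤ ‖uu i‖ ^ 2 := by
    intro i
    by_cases hbi : bb i = 0
    · have hvi : vv i = 0 := by
        simp only [hbbdef] at hbi
        exact norm_eq_zero.mp hbi
      have hu0 : uu i = 0 := by simp [huudef, hvi]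
      have hmi : mm i = 0 := by simp [hmmdef, hbi]
      rw [hu0, hmi]
      simp
    · have hbpos : 0 < bb i := (hb_nonneg i).lt_of_ne (Ne.symm hbi)
      have hTlow : η * bb i ≤ ‖T (vv i)‖ := by
        simpa [hbbdef] using hlow (vv i)
      have hCsm : ‖MY.proj C (T (vv i))‖ ≤ δ * bb i := by
        have h1 := hsmall (A i) (hAmeas i) (hAbd i)
        have h2 : (((MY.proj C).comp T).comp (MX.proj (A i))) (vv i)
            = MY.proj C (T (vv i)) := by
          simp only [ContinuousLinearMap.comp_apply]
          rw [hvv_idem i]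
        calc ‖MY.proj C (T (vv i))‖
            = ‖(((MY.proj C).comp T).comp (MX.proj (A i))) (vv i)‖ := by rw [h2]
          _ ≤ ‖((MY.proj C).comp T).comp (MX.proj (A i))‖ * ‖vv i‖ := le_opNorm _ _
          _ ≤ δ * bb i := mul_le_mul_of_nonneg_right h1 (hb_nonneg i)
      have hpyth : ‖MY.proj Cᶜ (T (vv i))‖ ^ 2
          = ‖T (vv i)‖ ^ 2 - ‖MY.proj C (T (vv i))‖ ^ 2 := by
        rw [hPCc]
        rw [ContinuousLinearMap.sub_apply, ContinuousLinearMap.one_apply]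
        exact sa_idem_pyth (MY.proj_idem C hC) (MY.proj_sa C hC) _
      have hDb : D * (bb i) ^ 2 ≤ ‖MY.proj Cᶜ (T (vv i))‖ ^ 2 := by
        rw [hpyth, hDdef]
        have e1 : (η * bb i) ^ 2 ≤ ‖T (vv i)‖ ^ 2 :=
          pow_le_pow_left₀ (by positivity) hTlow 2
        have e2 : ‖MY.proj C (T (vv i))‖ ^ 2 ≤ (δ * bb i) ^ 2 :=
          pow_le_pow_left₀ (norm_nonneg _) hCsm 2
        nlinarith [e1, e2]
      have hnu : ‖uu i‖ = ‖cc i‖ * ((bb i) ^ 2)⁻¹ * ‖MY.proj Cᶜ (T (vv i))‖ := by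
        simp only [huudef]
        rw [norm_smul, norm_mul, RCLike.norm_conj, norm_inv, norm_pow, Complex.norm_real,
          Real.norm_eq_abs, abs_of_nonneg (hb_nonneg i)]
      have hmmi : mm i = ‖cc i‖ / bb i := by simp only [hmmdef]
      rw [hnu, hmmi]
      have hfs : D * (‖cc i‖ / bb i) ^ 2
          = (‖cc i‖ * ((bb i) ^ 2)⁻¹) ^ 2 * (D * (bb i) ^ 2) := by
        field_simp
      rw [hfs]
      calc (‖cc i‖ * ((bb i) ^ 2)⁻¹) ^ 2 * (D * (bb i) ^ 2)
          ≤ (‖cc i‖ * ((bb i) ^ 2)⁻¹) ^ 2 * ‖MY.proj Cᶜ (T (vv i))‖ ^ 2 :=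
            mul_le_mul_of_nonneg_left hDb (by positivity)
        _ = (‖cc i‖ * ((bb i) ^ 2)⁻¹ * ‖MY.proj Cᶜ (T (vv i))‖) ^ 2 := by ring
  have hCS : (‖x‖ ^ 2 - mrg) ^ 2 ≤ ∑ i ∈ J, (mm i) ^ 2 := by
    have h1 : ‖x‖ ^ 2 - mrg < ∑ i ∈ J, bb i * mm i := by
      calc ‖x‖ ^ 2 - mrg < ∑ i ∈ J, (cc i).re := hReJ
        _ ≤ ∑ i ∈ J, ‖cc i‖ := Finset.sum_le_sum fun i _ =>
            le_trans (Complex.re_le_norm _) le_rfl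
        _ = ∑ i ∈ J, bb i * mm i := Finset.sum_congr rfl fun i _ => hc_eq i
    have h2 := Finset.sum_mul_sq_le_sq_mul_sq J bb mm
    have h3 : (∑ i ∈ J, (bb i) ^ 2) * (∑ i ∈ J, (mm i) ^ 2)
        ≤ 1 * (∑ i ∈ J, (mm i) ^ 2) :=
      mul_le_mul_of_nonneg_right hbsum (Finset.sum_nonneg fun i _ => sq_nonneg _)
    have h4 : 0 ≤ ‖x‖ ^ 2 - mrg := by
      rw [hmrgdef]
      nlinarith [hτ0, sq_nonneg ‖x‖]
    have h5 : (‖x‖ ^ 2 - mrg) ^ 2 ≤ (∑ i ∈ J, bb i * mm i) ^ 2 := by nlinarith [h1, h4]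
    calc (‖x‖ ^ 2 - mrg) ^ 2 ≤ (∑ i ∈ J, bb i * mm i) ^ 2 := h5
      _ ≤ (∑ i ∈ J, (bb i) ^ 2) * (∑ i ∈ J, (mm i) ^ 2) := h2
      _ ≤ 1 * (∑ i ∈ J, (mm i) ^ 2) := h3
      _ = ∑ i ∈ J, (mm i) ^ 2 := one_mul _
  obtain ⟨S, hSJ, hSbd⟩ := exists_subset_norm_sum_sq uu J 0
  have hufin : (ε * ‖x‖) ^ 2 < ‖∑ i ∈ S, uu i‖ ^ 2 := by
    have h1 : (4:ℝ)⁻¹ * ∑ i ∈ J, ‖uu i‖ ^ 2 ≤ ‖∑ i ∈ S, uu i‖ ^ 2 := by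
      simp only [zero_add] at hSbd
      nlinarith [hSbd, sq_nonneg ‖(2:ℝ)⁻¹ • ∑ i ∈ J, uu i‖]
    have h2 : D * ∑ i ∈ J, (mm i) ^ 2 ≤ ∑ i ∈ J, ‖uu i‖ ^ 2 := by
      rw [Finset.mul_sum]
      exact Finset.sum_le_sum fun i _ => hu_bd i
    have h3 : D * (‖x‖ ^ 2 - mrg) ^ 2 ≤ D * ∑ i ∈ J, (mm i) ^ 2 :=
      mul_le_mul_of_nonneg_left hCS hD0.le
    have h4 : τ ^ 2 < (‖x‖ ^ 2 - mrg) ^ 2 := by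
      have h4a : τ < ‖x‖ ^ 2 - mrg := by rw [hmrgdef]; linarith
      nlinarith [h4a, hτ0]
    have h5 : D * τ ^ 2 * (4:ℝ)⁻¹ = (ε * ‖x‖) ^ 2 := by
      rw [hτdef, mul_pow, div_pow, mul_pow, hsDsq]
      field_simp
      ring
    calc (ε * ‖x‖) ^ 2 = D * τ ^ 2 * (4:ℝ)⁻¹ := h5.symm
      _ < D * (‖x‖ ^ 2 - mrg) ^ 2 * (4:ℝ)⁻¹ := by nlinarith [h4, hD0]
      _ ≤ ‖∑ i ∈ S, uu i‖ ^ 2 := by nlinarith [h1, h2, h3]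
  have hxS : ε * ‖x‖ < ‖∑ i ∈ S, uu i‖ :=
    lt_of_pow_lt_pow_left₀ 2 (norm_nonneg _) hufin
  -- the projection
  set p : HX →L[ℂ] HX :=
    ∑ i ∈ S, ((((bb i : ℝ) : ℂ)) ^ 2)⁻¹ • ((innerSL ℂ (vv i)).smulRight (vv i)) with hpdef
  have hp_apply : ∀ z : HX,
      p z = ∑ i ∈ S, ((((bb i : ℝ) : ℂ)) ^ 2)⁻¹ • (⟪vv i, z⟫ • vv i) := by
    intro z
    rw [hpdef, ContinuousLinearMap.sum_apply]
    exact Finset.sum_congr rfl fun i _ => by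
      rw [ContinuousLinearMap.smul_apply, ContinuousLinearMap.smulRight_apply, innerSL_apply_apply]
  have horth : ∀ i j, i ≠ j → ⟪vv i, vv j⟫ = (0:ℂ) := by
    intro i j hij
    have h1 := sa_inner_comm (MX.proj_sa (A i) (hAmeas i)) v (vv j)
    have h2 : MX.proj (A i) (vv j) = 0 := by
      simp only [hvvdef]
      have h3 : MX.proj (A i) (MX.proj (A j) v) = (MX.proj ((A i) ∩ (A j))) v := by
        rw [MX.proj_inter (A i) (hAmeas i) (A j) (hAmeas j)]
        rfl
      rw [h3, hAdisj i j hij, CM_proj_empty]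
      rfl
    have h4 : ⟪vv i, vv j⟫ = ⟪v, MX.proj (A i) (vv j)⟫ := by
      simp only [hvvdef] at h1 ⊢
      exact h1
    rw [h4, h2, inner_zero_right]
  have hself : ∀ i, ⟪vv i, vv i⟫ = (((bb i : ℝ) : ℂ)) ^ 2 := by
    intro i
    rw [inner_self_eq_norm_sq_to_K]
    simp only [hbbdef]
    norm_cast
  have hpvv : ∀ j, j ∈ S → p (vv j) = vv j := by
    intro j hj
    rw [hp_apply (vv j)]
    rw [Finset.sum_eq_single j
      (fun i _ hij => by rw [horth i j hij]; simp)
      (fun h => absurd hj h)]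
    by_cases hbj : bb j = 0
    · have hvj : vv j = 0 := by
        simp only [hbbdef] at hbj
        exact norm_eq_zero.mp hbj
      simp [hvj]
    · rw [hself j, smul_smul, inv_mul_cancel₀ (by
        simp only [ne_eq, pow_eq_zero_iff, Complex.ofReal_eq_zero]
        exact fun h => hbj (by simpa using h)), one_smul]
  have hpidem : IsIdempotentElem p := by
    show p * p = p
    apply ContinuousLinearMap.ext
    intro z
    have h1 : (p * p) z = p (p z) := rfl
    rw [h1, hp_apply z, map_sum]
    apply Finset.sum_congr rfl
    intro i hi
    rw [map_smul, map_smul, hpvv i hi]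
  have hpsa : IsSelfAdjoint p := by
    rw [ContinuousLinearMap.isSelfAdjoint_iff_isSymmetric]
    intro z w
    simp only [ContinuousLinearMap.coe_coe]
    rw [hp_apply z, hp_apply w, sum_inner, inner_sum]
    apply Finset.sum_congr rfl
    intro i _
    rw [inner_smul_left, inner_smul_right, inner_smul_left, inner_smul_right,
      inner_conj_symm, map_inv₀, map_pow, Complex.conj_ofReal]
    ring
  have hsupp : SuppIn MX MX p Egauge := by
    intro A' hA' B' hB' hdisj
    apply ContinuousLinearMap.ext
    intro z
    simp only [ContinuousLinearMap.comp_apply, ContinuousLinearMap.zero_apply]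
    rw [hp_apply, map_sum]
    apply Finset.sum_eq_zero
    intro i _
    rw [map_smul, map_smul]
    by_cases hAA : A' ∩ A i = ∅
    · have h1 : ⟪vv i, MX.proj A' z⟫ = (0:ℂ) := by
        have h2 := sa_inner_comm (MX.proj_sa A' hA') (vv i) z
        rw [← h2]
        have h3 : MX.proj A' (vv i) = 0 := by
          simp only [hvvdef]
          have h4 : MX.proj A' (MX.proj (A i) v) = MX.proj (A' ∩ A i) v := by
            rw [MX.proj_inter A' hA' (A i) (hAmeas i)]
            rfl
          rw [h4, hAA, CM_proj_empty]
          rfl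
        rw [h3, inner_zero_left]
      rw [h1]
      simp
    · obtain ⟨x₀, hx₀⟩ := Set.nonempty_iff_ne_empty.mpr hAA
      have hBA : B' ∩ A i = ∅ := by
        rw [Set.eq_empty_iff_forall_notMem]
        rintro y ⟨hyB, hyA⟩
        have hyim : y ∈ relImage Egauge A' :=
          ⟨x₀, hx₀.1, hAbd i (Set.mk_mem_prod hyA hx₀.2)⟩
        exact (Set.eq_empty_iff_forall_notMem.mp hdisj y) ⟨hyB, hyim⟩
      have h3 : MX.proj B' (vv i) = 0 := by
        simp only [hvvdef]
        have h4 : MX.proj B' (MX.proj (A i) v) = MX.proj (B' ∩ A i) v := by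
          rw [MX.proj_inter B' hB' (A i) (hAmeas i)]
          rfl
        rw [h4, hBA, CM_proj_empty]
        rfl
      rw [h3]
      simp
  refine ⟨p, hpidem, hpsa, hsupp, ?_⟩
  intro hql
  have hempty : Cᶜ ∩ relImage F B = ∅ := by
    rw [Set.eq_empty_iff_forall_notMem]
    rintro y ⟨hyc, hyF⟩
    exact hyc (hFB hyF)
  have hqn := hql B hB Cᶜ (MY.compl_mem hC) hempty
  have heval : ((MY.proj Cᶜ).comp (((T.comp p).comp (adjoint T)).comp (MY.proj B))) x
      = ∑ i ∈ S, uu i := by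
    simp only [ContinuousLinearMap.comp_apply]
    rw [hPBx, hp_apply, map_sum, map_sum]
    apply Finset.sum_congr rfl
    intro i _
    rw [map_smul, map_smul, map_smul, map_smul]
    simp only [huudef]
    rw [smul_smul]
    congr 1
    have hconj : ⟪vv i, (adjoint T) x⟫ = (starRingEnd ℂ) (cc i) := by
      simp only [hccdef]
      exact (inner_conj_symm _ _).symm
    rw [hconj]
    ring
  have hle : ‖((MY.proj Cᶜ).comp (((T.comp p).comp (adjoint T)).comp (MY.proj B))) x‖
      ≤ ε * ‖x‖ := by
    calc ‖((MY.proj Cᶜ).comp (((T.comp p).comp (adjoint T)).comp (MY.proj B))) x‖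
        ≤ ‖(MY.proj Cᶜ).comp (((T.comp p).comp (adjoint T)).comp (MY.proj B))‖ * ‖x‖ :=
          le_opNorm _ _
      _ ≤ ε * ‖x‖ := mul_le_mul_of_nonneg_right hqn (norm_nonneg x)
  rw [heval] at hle
  linarith [hxS, hle]
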